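/- For real x with |x| < 1 and x ≠ 0, π·csc(π x) = 2·∑_{n=0}^∞ η(2n)·x^(2n−1), where η(0) = 1/2 and η(2n) = ∑_{k≥1} (−1)^{k−1}/k^{2n} for n ≥ 1. -/

import Mathlib

open Real

section helpers

open Complex

lemma int01_exp {c : ℂ} (hc : c ≠ 0) :
    (∫ t in (0:ℝ)..(0+1:ℝ), Complex.exp (c * t)) = (Complex.exp c - 1) / c := by
  rw [integral_exp_mul_complex hc]
  norm_num

lemma coeff_eq {x : ℝ} (hxn : ∀ n : ℤ, (x : ℂ) ≠ n) {hab : (0:ℝ) < 0 + 1} (n : ℤ) :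
    fourierCoeffOn hab (fun t : ℝ => Complex.cos (π * x * (2 * t - 1))) n =
      Complex.sin (π * x) * x / (π * ((x:ℂ)^2 - (n:ℂ)^2)) := by
  have hπ : (π : ℂ) ≠ 0 := Complex.ofReal_ne_zero.mpr Real.pi_ne_zero
  have hxn' : (x : ℂ) - n ≠ 0 := sub_ne_zero.mpr (hxn n)
  have hxp : (x : ℂ) + n ≠ 0 := by
    have := hxn (-n); intro h; apply this; push_cast; linear_combination h
  have ha1 : (2 * π * ((x:ℂ) - n) * Complex.I) ≠ 0 := by
    simp [hπ, hxn', Complex.I_ne_zero]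
  have ha2 : (-(2 * π * ((x:ℂ) + n) * Complex.I)) ≠ 0 := by
    simp [hπ, hxp, Complex.I_ne_zero]
  rw [fourierCoeffOn_eq_integral]
  have key : ∀ t : ℝ, (fourier (-n) (t : AddCircle ((0:ℝ) + 1 - 0)) : ℂ) •
      Complex.cos (π * x * (2 * t - 1)) =
      (Complex.exp (-(π * x * Complex.I)) * Complex.exp ((2 * π * ((x:ℂ) - n) * Complex.I) * t)
        + Complex.exp (π * x * Complex.I) * Complex.exp ((-(2 * π * ((x:ℂ) + n) * Complex.I)) * t)) / 2 := by
    intro t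
    rw [fourier_coe_apply, smul_eq_mul, Complex.cos, ← mul_div_assoc, mul_add,
      ← Complex.exp_add, ← Complex.exp_add, ← Complex.exp_add, ← Complex.exp_add]
    have h1 : 2 * (π:ℂ) * Complex.I * ((-n : ℤ):ℂ) * (t:ℝ) / (((0:ℝ)+1-0 : ℝ):ℂ) + π * x * (2*t - 1) * Complex.I
        = -(π * x * Complex.I) + (2 * π * ((x:ℂ) - n) * Complex.I) * t := by
      push_cast; field_simp; ring
    have h2 : 2 * (π:ℂ) * Complex.I * ((-n : ℤ):ℂ) * (t:ℝ) / (((0:ℝ)+1-0 : ℝ):ℂ) + -(π * x * (2*t - 1)) * Complex.I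
        = π * x * Complex.I + (-(2 * π * ((x:ℂ) + n) * Complex.I)) * t := by
      push_cast; field_simp; ring
    rw [h1, h2]
  simp_rw [key]
  rw [intervalIntegral.integral_div, intervalIntegral.integral_add
      (Continuous.intervalIntegrable (by fun_prop) _ _)
      (Continuous.intervalIntegrable (by fun_prop) _ _),
    intervalIntegral.integral_const_mul, intervalIntegral.integral_const_mul,
    int01_exp ha1, int01_exp ha2]
  set E := Complex.exp (π * x * Complex.I) with hEdef
  have e1 : Complex.exp (2 * π * ((x:ℂ) - n) * Complex.I) = E ^ 2 := by
    rw [hEdef, sq, ← Complex.exp_add, show (2 * (π:ℂ) * ((x:ℂ) - n) * Complex.I)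
      = (π * x * Complex.I + π * x * Complex.I) + (-n : ℤ) * (2 * π * Complex.I) by push_cast; ring,
      Complex.exp_add, Complex.exp_int_mul_two_pi_mul_I, mul_one]
  have e2 : Complex.exp (-(2 * π * ((x:ℂ) + n) * Complex.I)) = (E ^ 2)⁻¹ := by
    rw [hEdef, sq, ← Complex.exp_add, ← Complex.exp_neg, show (-(2 * (π:ℂ) * ((x:ℂ) + n) * Complex.I))
      = -(π * x * Complex.I + π * x * Complex.I) + (-n : ℤ) * (2 * π * Complex.I) by push_cast; ring,
      Complex.exp_add, Complex.exp_int_mul_two_pi_mul_I, mul_one]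
  have hdivI : ∀ c d : ℂ, c / (d * Complex.I) = -(c / d * Complex.I) := by
    intro c d
    rw [div_mul_eq_div_div, Complex.div_I]
  have t1 : (Complex.exp (2 * π * ((x:ℂ) - n) * Complex.I) - 1) / (2 * π * ((x:ℂ) - n) * Complex.I)
      = -((E ^ 2 - 1) / (2 * π * ((x:ℂ) - n)) * Complex.I) := by
    rw [e1, hdivI]
  have t2 : (Complex.exp (-(2 * π * ((x:ℂ) + n) * Complex.I)) - 1) / (-(2 * π * ((x:ℂ) + n) * Complex.I))
      = ((E ^ 2)⁻¹ - 1) / (2 * π * ((x:ℂ) + n)) * Complex.I := by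
    rw [e2, div_neg, hdivI, neg_neg]
  rw [t1, t2, Complex.sin, show (-((π:ℂ) * x) * Complex.I) = -(π * x * Complex.I) by ring,
    Complex.exp_neg, ← hEdef]
  have hE : E ≠ 0 := Complex.exp_ne_zero _
  have hd : (x:ℂ)^2 - (n:ℂ)^2 ≠ 0 := by
    intro h; apply hxn'
    rcases mul_eq_zero.mp (show ((x:ℂ) - n) * ((x:ℂ) + n) = 0 by linear_combination h) with h'|h'
    · exact h'
    · exact absurd h' hxp
  rw [show ((1:ℝ)/((0:ℝ)+1-0)) = 1 by norm_num, one_smul]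
  field_simp [hE, hπ, hxn', hxp, hd]
  ring

lemma sumnat : Summable (fun n : ℕ => (((n:ℝ) + 1)^2)⁻¹) := by
  have h := Real.summable_one_div_nat_pow.mpr (one_lt_two (α := ℕ))
  have := (summable_nat_add_iff (f := fun n : ℕ => 1 / (n:ℝ)^2) 1).mpr h
  refine this.congr fun n => ?_
  push_cast
  rw [one_div]

lemma summable_inv_sq_sub {x : ℝ} (hx : |x| < 1) :
    Summable (fun n : ℤ => |x^2 - (n:ℝ)^2|⁻¹) := by
  have hx2 : x^2 < 1 := by
    have := abs_nonneg x
    nlinarith [_root_.sq_abs x]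
  have hnat : Summable (fun n : ℕ => |x^2 - (n:ℝ)^2|⁻¹) := by
    refine (summable_nat_add_iff 2).mp ?_
    refine Summable.of_nonneg_of_le (fun n => by positivity) (fun n => ?_) sumnat
    have h1 : (1:ℝ) ≤ ((n:ℝ)+2)^2 - x^2 := by nlinarith [Nat.cast_nonneg (α := ℝ) n]
    have h2 : |x^2 - ((n:ℝ)+2)^2| = ((n:ℝ)+2)^2 - x^2 := by
      rw [abs_of_nonpos (by nlinarith)]; ring
    push_cast
    rw [h2]
    have h3 : ((n:ℝ)+1)^2 ≤ ((n:ℝ)+2)^2 - x^2 := by nlinarith [Nat.cast_nonneg (α := ℝ) n]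
    exact inv_anti₀ (by positivity) (by push_cast; linarith)
  refine Summable.of_nat_of_neg (hnat.congr fun n => by norm_num) (hnat.congr fun n => ?_)
  push_cast
  norm_num

lemma summable_c {x : ℝ} (hx : |x| < 1) :
    Summable (fun n : ℤ => Complex.sin (π*x) * x / (π * ((x:ℂ)^2 - (n:ℂ)^2))) := by
  have : Summable (fun n : ℤ => ((x:ℂ)^2 - (n:ℂ)^2)⁻¹) := by
    refine Summable.of_norm ?_
    refine (summable_inv_sq_sub hx).congr fun n => ?_
    rw [show (x:ℂ)^2 - (n:ℂ)^2 = ((x^2 - (n:ℝ)^2 : ℝ) : ℂ) by push_cast; ring,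
      norm_inv, Complex.norm_real, Real.norm_eq_abs]
  refine (this.mul_left (Complex.sin (π*x) * x / π)).congr fun n => ?_
  rw [← div_eq_mul_inv, div_div]

lemma sin_pi_mul_ne {x : ℝ} (hx : |x| < 1) (hx0 : x ≠ 0) : Real.sin (π * x) ≠ 0 := by
  rcases lt_or_gt_of_ne hx0 with h | h
  · have h1 : 0 < -x := by linarith
    have h2 : -x < 1 := by
      have := abs_lt.mp hx; linarith
    have : 0 < Real.sin (π * (-x)) :=
      Real.sin_pos_of_pos_of_lt_pi (by positivity) (by nlinarith [Real.pi_pos])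
    rw [mul_neg, Real.sin_neg] at this
    intro hs; rw [hs] at this; simp at this
  · have h2 : x < 1 := (abs_lt.mp hx).2
    have : 0 < Real.sin (π * x) :=
      Real.sin_pos_of_pos_of_lt_pi (by positivity) (by nlinarith [Real.pi_pos])
    exact ne_of_gt this

lemma hasSum_cscZ {x : ℝ} (hx : |x| < 1) (hx0 : x ≠ 0) :
    HasSum (fun i : ℤ => (-1 : ℝ)^i * x / (x^2 - (i:ℝ)^2)) (π / Real.sin (π * x)) := by
  haveI : Fact (0 < (1:ℝ)) := ⟨one_pos⟩
  have hxn : ∀ n : ℤ, (x : ℂ) ≠ n := by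
    intro n h
    have hxn' : x = (n : ℝ) := by exact_mod_cast h
    rw [hxn'] at hx
    have : n = 0 := by
      rwa [← Int.cast_abs, show ((1:ℝ)) = ((1:ℤ):ℝ) by norm_num, Int.cast_lt,
        Int.abs_lt_one_iff] at hx
    rw [this] at hxn'
    exact hx0 (by simp [hxn'])
  have hsin := sin_pi_mul_ne hx hx0
  set f : ℝ → ℂ := fun t => Complex.cos (π * x * (2 * t - 1)) with hf
  have hper : f 0 = f 1 := by
    simp only [hf]
    rw [show (π:ℂ) * x * (2 * ((1:ℝ):ℂ) - 1) = π * x by push_cast; ring,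
      show (π:ℂ) * x * (2 * ((0:ℝ):ℂ) - 1) = -(π * x) by push_cast; ring, Complex.cos_neg]
  have hcont : Continuous f := by fun_prop
  set F : C(AddCircle (1:ℝ), ℂ) := ⟨AddCircle.liftIco 1 0 f, AddCircle.liftIco_zero_continuous hper hcont.continuousOn⟩ with hF
  have hcoeff : ∀ n : ℤ, fourierCoeff (F : AddCircle (1:ℝ) → ℂ) n
      = Complex.sin (π * x) * x / (π * ((x:ℂ)^2 - (n:ℂ)^2)) := by
    intro n
    show fourierCoeff (AddCircle.liftIco 1 0 f) n = _
    rw [fourierCoeff_liftIco_eq]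
    exact coeff_eq hxn n
  have hsummable : Summable (fourierCoeff (F : AddCircle (1:ℝ) → ℂ)) :=
    (summable_c hx).congr fun n => (hcoeff n).symm
  have hps := has_pointwise_sum_fourier_series_of_summable hsummable (((1:ℝ)/2 : ℝ) : AddCircle (1:ℝ))
  have hFval : F (((1:ℝ)/2 : ℝ) : AddCircle (1:ℝ)) = 1 := by
    show AddCircle.liftIco 1 0 f (((1:ℝ)/2 : ℝ) : AddCircle (1:ℝ)) = 1
    rw [AddCircle.liftIco_coe_apply (by norm_num : ((1:ℝ)/2) ∈ Set.Ico (0:ℝ) (0 + 1))]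
    simp only [hf]
    norm_num
  have hfour : ∀ i : ℤ, (fourier i (((1:ℝ)/2 : ℝ) : AddCircle (1:ℝ)) : ℂ) = (-1 : ℂ)^i := by
    intro i
    rw [fourier_coe_apply]
    rw [show 2 * (π:ℂ) * Complex.I * (i:ℂ) * (((1:ℝ)/2 : ℝ):ℂ) / ((1:ℝ):ℂ)
      = (i:ℂ) * ((π:ℂ) * Complex.I) by push_cast; ring]
    rw [Complex.exp_int_mul, Complex.exp_pi_mul_I]
  rw [hFval] at hps
  have hps2 := hps.mul_left ((π:ℂ) / Complex.sin (π * x))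
  rw [mul_one] at hps2
  have hsinC : Complex.sin ((π:ℝ) * x) ≠ 0 := by
    rw [show ((π:ℝ):ℂ) * (x:ℂ) = (((π * x : ℝ)):ℂ) by push_cast; ring, ← Complex.ofReal_sin]
    exact_mod_cast hsin
  have hπ : (π : ℂ) ≠ 0 := Complex.ofReal_ne_zero.mpr Real.pi_ne_zero
  have key : ∀ i : ℤ, ((π:ℂ) / Complex.sin (π * x)) * (fourierCoeff (F : AddCircle (1:ℝ) → ℂ) i • (fourier i (((1:ℝ)/2 : ℝ) : AddCircle (1:ℝ)) : ℂ))
      = (((-1 : ℝ)^i * x / (x^2 - (i:ℝ)^2) : ℝ) : ℂ) := by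
    intro i
    rw [smul_eq_mul, hcoeff i, hfour i]
    have hd : (x:ℂ)^2 - (i:ℂ)^2 ≠ 0 := by
      intro h
      have h1 : ((x^2 - (i:ℝ)^2 : ℝ) : ℂ) = 0 := by push_cast; linear_combination h
      have h2 : x^2 = (i:ℝ)^2 := by
        have := Complex.ofReal_eq_zero.mp h1; linarith
      rcases sq_eq_sq_iff_eq_or_eq_neg.mp h2 with h3 | h3
      · exact hxn i (by exact_mod_cast congrArg (Complex.ofReal ·) h3)
      · exact hxn (-i) (by push_cast; exact_mod_cast congrArg (Complex.ofReal ·) h3)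
    push_cast
    field_simp
  have heq : (fun i : ℤ => ((π:ℂ) / Complex.sin (π * x)) * (fourierCoeff (F : AddCircle (1:ℝ) → ℂ) i • (fourier i (((1:ℝ)/2 : ℝ) : AddCircle (1:ℝ)) : ℂ)))
      = fun i : ℤ => (((-1 : ℝ)^i * x / (x^2 - (i:ℝ)^2) : ℝ) : ℂ) := funext key
  rw [heq] at hps2
  have hsum : ((π:ℂ) / Complex.sin ((π:ℝ) * (x:ℝ))) = (((π / Real.sin (π * x) : ℝ)) : ℂ) := by
    rw [show ((π:ℝ):ℂ) * (x:ℂ) = (((π * x : ℝ)):ℂ) by push_cast; ring, ← Complex.ofReal_sin]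
    push_cast
    ring
  rw [hsum] at hps2
  exact hasSum_ofReal.mp hps2

lemma hasSum_csc_nat {x : ℝ} (hx : |x| < 1) (hx0 : x ≠ 0) :
    HasSum (fun n : ℕ => 2 * (-1:ℝ)^n * x / (((n:ℝ)+1)^2 - x^2))
      (π / Real.sin (π * x) - 1/x) := by
  have h2 : HasSum (fun n : ℕ => 2 * (-1:ℝ)^n * x / (x^2 - (n:ℝ)^2))
      (π / Real.sin (π * x) + 1/x) := by
    convert (hasSum_cscZ hx hx0).nat_add_neg using 1
    · funext n
      push_cast
      simp only [zpow_natCast, zpow_neg, neg_sq]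
      rw [← inv_pow, inv_neg, inv_one]
      ring
    · simp only [Int.cast_zero, zpow_zero, one_mul]
      rw [sq]
      field_simp
      ring
  have h3 : HasSum (fun n : ℕ => 2 * (-1:ℝ)^(n+1) * x / (x^2 - ((n+1:ℕ):ℝ)^2))
      (π / Real.sin (π * x) - 1/x) := by
    refine (hasSum_nat_add_iff (f := fun n : ℕ => 2 * (-1:ℝ)^n * x / (x^2 - (n:ℝ)^2)) 1).mpr ?_
    convert h2 using 1
    · rfl
    rw [Finset.sum_range_one]
    norm_num
    field_simp
    ring
  have hfe : (fun n : ℕ => 2 * (-1:ℝ)^(n+1) * x / (x^2 - ((n+1:ℕ):ℝ)^2))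
      = fun n : ℕ => 2 * (-1:ℝ)^n * x / (((n:ℝ)+1)^2 - x^2) := by
    funext n
    push_cast
    rw [show x^2 - ((n:ℝ)+1)^2 = -((((n:ℝ)+1)^2 - x^2)) by ring, div_neg, pow_succ]
    ring
  rwa [hfe] at h3

end helpers

/-- Dirichlet eta at even arguments, with the convention η(0) = 1/2. -/
noncomputable def etaC (s : ℕ) : ℝ :=
  if s = 0 then 1 / 2 else ∑' k : ℕ, (-1 : ℝ) ^ k / ((k : ℝ) + 1) ^ s

theorem stmt_6 (x : ℝ) (hx : |x| < 1) (hx0 : x ≠ 0) :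
    π * (Real.sin (π * x))⁻¹ =
      2 * ∑' n : ℕ, etaC (2 * n) * x ^ (2 * (n : ℤ) - 1) := by
  have hx2 : x^2 < 1 := by nlinarith [_root_.sq_abs x, abs_nonneg x]
  have hx1 : |x| ≤ 1 := hx.le
  set F : ℕ × ℕ → ℝ := fun p => (-1:ℝ)^p.2 * x^(2*p.1+1) / ((p.2:ℝ)+1)^(2*p.1+2) with hFdef
  have hk0 : ∀ k : ℕ, ((k:ℝ)+1) ≠ 0 := fun k => by positivity
  have hk1 : ∀ k : ℕ, (1:ℝ) ≤ ((k:ℝ)+1)^2 := fun k => by nlinarith [Nat.cast_nonneg (α := ℝ) k]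
  have hkd : ∀ k : ℕ, ((k:ℝ)+1)^2 - x^2 ≠ 0 := fun k => by nlinarith [hk1 k]
  have hFsum : Summable F := by
    rw [← summable_abs_iff]
    have hbound : Summable (fun p : ℕ × ℕ => (x^2)^p.1 * ((((p.2:ℝ)+1)^2)⁻¹)) := by
      apply Summable.mul_of_nonneg (summable_geometric_of_lt_one (sq_nonneg x) hx2) sumnat
      · intro m; positivity
      · intro k; positivity
    refine Summable.of_nonneg_of_le (fun p => abs_nonneg _) (fun p => ?_) hbound
    obtain ⟨m, k⟩ := p
    simp only [hFdef]
    rw [_root_.abs_div, _root_.abs_mul, _root_.abs_pow, _root_.abs_pow, _root_.abs_pow,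
      abs_neg, abs_one, one_pow, one_mul,
      _root_.abs_of_nonneg (show (0:ℝ) ≤ (k:ℝ)+1 by positivity)]
    have h1 : |x|^(2*m+1) ≤ (x^2)^m := by
      calc |x|^(2*m+1) ≤ |x|^(2*m) := pow_le_pow_of_le_one (abs_nonneg x) hx1 (by omega)
      _ = (x^2)^m := by rw [← _root_.sq_abs, ← pow_mul]
    have h2 : ((k:ℝ)+1)^2 ≤ ((k:ℝ)+1)^(2*m+2) := by
      apply pow_le_pow_right₀ (by nlinarith [Nat.cast_nonneg (α := ℝ) k]) (by omega)
    have h0 : (0:ℝ) ≤ (x^2)^m := by positivity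
    calc |x|^(2*m+1) / ((k:ℝ)+1)^(2*m+2) ≤ (x^2)^m / ((k:ℝ)+1)^2 :=
          div_le_div₀ h0 h1 (by positivity) h2
      _ = (x^2)^m * ((((k:ℝ)+1)^2)⁻¹) := by rw [div_eq_mul_inv]
  have hgeom : ∀ k : ℕ, HasSum (fun m => F (m,k)) ((-1:ℝ)^k * x / (((k:ℝ)+1)^2 - x^2)) := by
    intro k
    have hr1 : x^2/((k:ℝ)+1)^2 < 1 := by
      rw [div_lt_one (by positivity)]; linarith [hk1 k]
    have h := (hasSum_geometric_of_lt_one (by positivity) hr1).mul_left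
      ((-1:ℝ)^k * x / ((k:ℝ)+1)^2)
    convert h using 1
    · rfl
    · funext m
      simp only [hFdef]
      rw [div_pow]
      simp only [← pow_mul]
      rw [div_mul_div_comm,
        div_eq_div_iff (by positivity : (((k:ℝ)+1)^(2*m+2)) ≠ 0)
          (by positivity : (((k:ℝ)+1)^2 * ((k:ℝ)+1)^(2*m)) ≠ 0)]
      ring
    · rw [show (1 - x^2/((k:ℝ)+1)^2) = (((k:ℝ)+1)^2 - x^2)/((k:ℝ)+1)^2 by field_simp,
        inv_div, div_mul_div_comm,
        div_eq_div_iff (hkd k) (mul_ne_zero (by positivity : (((k:ℝ)+1)^2) ≠ 0) (hkd k))]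
      ring
  have hA : HasSum (fun k : ℕ => (-1:ℝ)^k * x / (((k:ℝ)+1)^2 - x^2)) (∑' p : ℕ × ℕ, F p) := by
    have h := HasSum.prod_fiberwise (hFsum.prod_symm.hasSum) hgeom
    rwa [show ∑' p : ℕ × ℕ, F p.swap = ∑' p : ℕ × ℕ, F p from
      (Equiv.prodComm ℕ ℕ).tsum_eq F] at h
  have heta : ∀ m : ℕ, HasSum (fun k => F (m,k)) (etaC (2*(m+1)) * x^(2*m+1)) := by
    intro m
    have hs : Summable (fun k => F (m,k)) := hFsum.prod_factor m
    have h1 : (fun k => F (m,k)) = fun k : ℕ => x^(2*m+1) * ((-1:ℝ)^k / ((k:ℝ)+1)^(2*(m+1))) := by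
      funext k
      simp only [hFdef]
      rw [show 2*(m+1) = 2*m+2 by ring]
      ring
    rw [h1] at hs ⊢
    have hg : Summable (fun k : ℕ => (-1:ℝ)^k / ((k:ℝ)+1)^(2*(m+1))) :=
      (summable_mul_left_iff (f := fun k : ℕ => (-1:ℝ)^k / ((k:ℝ)+1)^(2*(m+1))) (a := x^(2*m+1)) (pow_ne_zero _ hx0)).mp hs
    have : etaC (2*(m+1)) = ∑' k : ℕ, (-1:ℝ)^k / ((k:ℝ)+1)^(2*(m+1)) := by
      rw [etaC, if_neg (by omega)]
    rw [this]
    convert hg.hasSum.mul_left (x^(2*m+1)) using 1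
    · rfl
    ring
  have hB : HasSum (fun m : ℕ => etaC (2*(m+1)) * x^(2*m+1)) (∑' p : ℕ × ℕ, F p) :=
    HasSum.prod_fiberwise hFsum.hasSum heta
  have h2A : 2 * (∑' p : ℕ × ℕ, F p) = π / Real.sin (π * x) - 1/x := by
    have hff : (fun k : ℕ => 2 * ((-1:ℝ)^k * x / (((k:ℝ)+1)^2 - x^2)))
        = fun k : ℕ => 2 * (-1:ℝ)^k * x / (((k:ℝ)+1)^2 - x^2) := by
      funext k; ring
    have h2 := hA.mul_left 2
    rw [hff] at h2
    exact h2.unique (hasSum_csc_nat hx hx0)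
  -- assemble the full sum
  have hfe2 : ∀ n : ℕ, x ^ (2*((n+1:ℕ):ℤ) - 1) = x^(2*n+1) := fun n => by
    rw [show (2*((n+1:ℕ):ℤ) - 1) = ((2*n+1 : ℕ) : ℤ) by push_cast; ring, zpow_natCast]
  have hshift : HasSum (fun n : ℕ => etaC (2*(n+1)) * x ^ (2*((n+1:ℕ):ℤ) - 1)) (∑' p : ℕ × ℕ, F p) := by
    simp only [hfe2]
    exact hB
  have hfull : HasSum (fun n : ℕ => etaC (2*n) * x ^ (2*(n:ℤ) - 1))
      ((∑' p : ℕ × ℕ, F p) + ∑ i ∈ Finset.range 1, etaC (2*i) * x ^ (2*(i:ℤ) - 1) ) :=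
    (hasSum_nat_add_iff (f := fun n : ℕ => etaC (2*n) * x ^ (2*(n:ℤ) - 1)) 1).mp hshift
  rw [hfull.tsum_eq, Finset.sum_range_one]
  have : etaC (2*0) * x ^ (2*((0:ℕ):ℤ) - 1) = 1/2 * x⁻¹ := by
    norm_num [etaC]
  rw [this]
  rw [eq_comm, mul_add, ← mul_assoc, h2A]
  rw [div_eq_mul_inv, one_div]
  ring
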